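/- arXiv:1709.01393 — 2 statements merged into one kernel-verified Lean document; each statement's English description precedes it below -/
import Mathlib

section
/- The polycyclic monoid P_ω (on countably many generators) embeds into the polycyclic monoid P_2. -/
universe u

/-- A directed graph. -/
structure DiGraph : Type (u + 1) where
  V : Type u
  E : Type u
  s : E → V
  r : E → V

namespace DiGraph

variable (G : DiGraph.{u})

/-- A list of edges forms a valid path starting at vertex `v`. -/
def Valid (v : G.V) : List G.E → Prop
  | [] => True
  | e :: l => G.s e = v ∧ Valid (G.r e) l

/-- the endpoint of a list of edges starting at `v`. -/
def dst (v : G.V) : List G.E → G.V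
  | [] => v
  | e :: l => dst (G.r e) l

variable {G}

lemma dst_append (v : G.V) (l₁ l₂ : List G.E) :
    G.dst v (l₁ ++ l₂) = G.dst (G.dst v l₁) l₂ := by
  induction l₁ generalizing v with
  | nil => rfl
  | cons e t ih => simp [dst, ih]

lemma valid_append (v : G.V) (l₁ l₂ : List G.E) :
    G.Valid v (l₁ ++ l₂) ↔ G.Valid v l₁ ∧ G.Valid (G.dst v l₁) l₂ := by
  induction l₁ generalizing v with
  | nil => simp [Valid, dst]
  | cons e t ih => simp [Valid, dst, ih, and_assoc]

variable (G) in
/-- A (finite, directed) path in `G`: a source vertex together with a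
composable list of edges.  Paths of length zero are the vertices. -/
structure GPath : Type u where
  src : G.V
  edges : List G.E
  valid : G.Valid src edges

/-- The range (end vertex) of a path. -/
def GPath.rng (p : G.GPath) : G.V := G.dst p.src p.edges

/-- Concatenation of composable paths. -/
def GPath.comp (p q : G.GPath) (h : p.rng = q.src) : G.GPath :=
  ⟨p.src, p.edges ++ q.edges, by
    rw [valid_append]
    exact ⟨p.valid, by rw [show G.dst p.src p.edges = q.src from h]; exact q.valid⟩⟩

lemma GPath.comp_rng (p q : G.GPath) (h : p.rng = q.src) : (p.comp q h).rng = q.rng := by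
  show G.dst p.src (p.edges ++ q.edges) = _
  rw [dst_append, show G.dst p.src p.edges = q.src from h]; rfl

/-- If `p` is a prefix of the path `q`, the remaining path (so that
`q = p.comp (p.strip q _ _)`). -/
def GPath.strip (p q : G.GPath) (hs : p.src = q.src) (hp : p.edges <+: q.edges) : G.GPath :=
  ⟨p.rng, q.edges.drop p.edges.length, by
    obtain ⟨t, ht⟩ := hp
    have h1 : p.edges ++ q.edges.drop p.edges.length = q.edges := by
      rw [← ht, List.drop_left]
    have h2 : G.Valid p.src (p.edges ++ q.edges.drop p.edges.length) := by
      rw [h1, hs]; exact q.valid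
    exact ((valid_append _ _ _).mp h2).2⟩

lemma GPath.strip_rng (p q : G.GPath) (hs : p.src = q.src) (hp : p.edges <+: q.edges) :
    (p.strip q hs hp).rng = q.rng := by
  show G.dst p.rng (q.edges.drop p.edges.length) = G.dst q.src q.edges
  obtain ⟨t, ht⟩ := hp
  have h1 : p.edges ++ q.edges.drop p.edges.length = q.edges := by
    rw [← ht, List.drop_left]
  conv_rhs => rw [← hs, ← h1]
  rw [dst_append]; rfl

variable (G) in
/-- A nonzero element `a b⁻¹` of the graph inverse semigroup: a pair of
paths with the same range. -/
structure NZ : Type u where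
  a : G.GPath
  b : G.GPath
  h : a.rng = b.rng

/-- The graph inverse semigroup `G(E)` over a directed graph, in normal form:
the elements `a b⁻¹` with `r(a) = r(b)`, together with a zero element. -/
def GIS (G : DiGraph.{u}) : Type u := Option (NZ G)

instance : Zero (GIS G) := ⟨none⟩

open scoped Classical in
/-- The multiplication of the graph inverse semigroup:
`a b⁻¹ · c d⁻¹ = a c₁ d⁻¹` if `c = b c₁`, `a (d b₁)⁻¹` if `b = c b₁`, and `0` otherwise. -/
noncomputable instance : Mul (GIS G) :=
  ⟨fun x y =>
    match x, y with
    | none, _ => none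
    | some _, none => none
    | some ⟨a, b, hab⟩, some ⟨c, d, hcd⟩ =>
      if h : b.src = c.src ∧ b.edges <+: c.edges then
        some ⟨a.comp (b.strip c h.1 h.2) hab, d, by
          exact (GPath.comp_rng _ _ _).trans ((GPath.strip_rng _ _ _ _).trans hcd)⟩
      else if h' : c.src = b.src ∧ c.edges <+: b.edges then
        some ⟨a, d.comp (c.strip b h'.1 h'.2) hcd.symm, by
          exact hab.trans ((GPath.strip_rng _ _ _ _).symm.trans (GPath.comp_rng _ _ _).symm)⟩
      else none⟩

/-- The nonzero element `a b⁻¹` of `G(E)` determined by a pair of paths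
with the same range. -/
def GIS.nz (n : NZ G) : GIS G := some n

/-- The inversion of the graph inverse semigroup: `(u v⁻¹)⁻¹ = v u⁻¹`. -/
def GIS.inv : GIS G → GIS G
  | none => none
  | some ⟨a, b, h⟩ => some ⟨b, a, h.symm⟩

end DiGraph
namespace DiGraph

/-- The graph with one vertex and a loop for each element of `ι`. -/
def bouquet (ι : Type u) : DiGraph.{u} :=
  ⟨PUnit, ι, fun _ => PUnit.unit, fun _ => PUnit.unit⟩

/-- The polycyclic monoid `P_ι` on a set `ι` of generators, realized as the
graph inverse semigroup over the graph with one vertex and `ι` many loops. -/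
def PolyM (ι : Type u) : Type u := GIS (bouquet ι)

noncomputable instance (ι : Type u) : Mul (PolyM ι) :=
  inferInstanceAs (Mul (GIS (bouquet ι)))

instance (ι : Type u) : Zero (PolyM ι) := inferInstanceAs (Zero (GIS (bouquet ι)))

end DiGraph


namespace PolyEmbed

open DiGraph

/-- Codeword for `n`: `n` trues followed by a false (prefix-free code). -/
def cw (n : ℕ) : List Bool := List.replicate n true ++ [false]

lemma cw_append_inj : ∀ (a b : ℕ) (x y : List Bool), cw a ++ x = cw b ++ y → a = b ∧ x = y := by
  intro a
  induction a with
  | zero =>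
    intro b x y h
    cases b with
    | zero => simpa [cw] using h
    | succ m => simp [cw, List.replicate_succ] at h
  | succ n ih =>
    intro b x y h
    cases b with
    | zero => simp [cw, List.replicate_succ] at h
    | succ m =>
      simp only [cw, List.replicate_succ, List.cons_append, List.cons.injEq] at h
      obtain ⟨he, ht⟩ := ih m x y h.2
      exact ⟨by omega, ht⟩

/-- Encode a list of naturals as a list of booleans. -/
def code (l : List ℕ) : List Bool := l.flatMap cw

@[simp] lemma code_nil : code [] = [] := rfl

lemma code_cons (a : ℕ) (t : List ℕ) : code (a :: t) = cw a ++ code t := rfl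

lemma code_append (l₁ l₂ : List ℕ) : code (l₁ ++ l₂) = code l₁ ++ code l₂ := by
  simp [code]

lemma code_prefix {l₁ l₂ : List ℕ} : code l₁ <+: code l₂ ↔ l₁ <+: l₂ := by
  constructor
  · intro h
    induction l₁ generalizing l₂ with
    | nil => exact List.nil_prefix
    | cons a t ih =>
      cases l₂ with
      | nil =>
        obtain ⟨s, hs⟩ := h
        simp [code_cons, cw] at hs
      | cons b t₂ =>
        obtain ⟨s, hs⟩ := h
        rw [code_cons, code_cons, List.append_assoc] at hs
        obtain ⟨rfl, hs'⟩ := cw_append_inj a b _ _ hs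
        obtain ⟨u, rfl⟩ := ih ⟨s, hs'⟩
        exact ⟨u, rfl⟩
  · rintro ⟨t, rfl⟩
    rw [code_append]
    exact ⟨code t, rfl⟩

lemma code_inj : Function.Injective code := by
  intro l₁ l₂ h
  induction l₁ generalizing l₂ with
  | nil =>
    cases l₂ with
    | nil => rfl
    | cons b t₂ => simp [code_cons, cw] at h
  | cons a t ih =>
    cases l₂ with
    | nil => simp [code_cons, cw] at h
    | cons b t₂ =>
      rw [code_cons, code_cons] at h
      obtain ⟨rfl, h'⟩ := cw_append_inj a b _ _ h
      rw [ih h']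

lemma code_drop {l₁ l₂ : List ℕ} (h : l₁ <+: l₂) :
    (code l₂).drop (code l₁).length = code (l₂.drop l₁.length) := by
  obtain ⟨t, rfl⟩ := h
  rw [code_append, List.drop_left, List.drop_left]

instance (ι : Type) : Subsingleton (bouquet ι).V :=
  inferInstanceAs (Subsingleton PUnit)

lemma valid_bouquet (ι : Type) (v : (bouquet ι).V) (l : List (bouquet ι).E) :
    (bouquet ι).Valid v l := by
  induction l generalizing v with
  | nil => trivial
  | cons e t ih => exact ⟨Subsingleton.elim _ _, ih _⟩

/-- Encoding on paths. -/
def enc (p : (bouquet ℕ).GPath) : (bouquet Bool).GPath :=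
  ⟨PUnit.unit, code p.edges, valid_bouquet _ _ _⟩

lemma gpath_eq {ι : Type} (p q : (bouquet ι).GPath) (h : p.edges = q.edges) : p = q := by
  obtain ⟨v, e, w⟩ := p
  obtain ⟨v', e', w'⟩ := q
  have hv : v = v' := Subsingleton.elim _ _
  subst hv; subst h; rfl

lemma nz_eq {ι : Type} (x y : NZ (bouquet ι)) (ha : x.a.edges = y.a.edges)
    (hb : x.b.edges = y.b.edges) : x = y := by
  obtain ⟨a, b, h⟩ := x
  obtain ⟨a', b', h'⟩ := y
  have h1 : a = a' := gpath_eq _ _ ha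
  have h2 : b = b' := gpath_eq _ _ hb
  subst h1; subst h2; rfl

/-- The underlying function of the embedding. -/
def F : PolyM ℕ → PolyM Bool
  | none => none
  | some ⟨a, b, _⟩ => some ⟨enc a, enc b, Subsingleton.elim _ _⟩

lemma F_inj : Function.Injective F := by
  intro x y h
  cases x with
  | none =>
    cases y with
    | none => rfl
    | some m => obtain ⟨c, d, hcd⟩ := m; exact absurd h (by simp [F])
  | some n =>
    cases y with
    | none => obtain ⟨a, b, hab⟩ := n; exact absurd h (by simp [F])
    | some m =>
      obtain ⟨a, b, hab⟩ := n
      obtain ⟨c, d, hcd⟩ := m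
      simp only [F] at h
      injection h with h
      exact congrArg some (nz_eq _ _
        (code_inj (congrArg (fun z : NZ (bouquet Bool) => z.a.edges) h))
        (code_inj (congrArg (fun z : NZ (bouquet Bool) => z.b.edges) h)))

open scoped Classical in
lemma mul_some_some {G : DiGraph} (a b : G.GPath) (hab : a.rng = b.rng)
    (c d : G.GPath) (hcd : c.rng = d.rng) :
    (GIS.nz ⟨a, b, hab⟩ * GIS.nz ⟨c, d, hcd⟩ : GIS G) =
      if h : b.src = c.src ∧ b.edges <+: c.edges then
        some ⟨a.comp (b.strip c h.1 h.2) hab, d, by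
          exact (GPath.comp_rng _ _ _).trans ((GPath.strip_rng _ _ _ _).trans hcd)⟩
      else if h' : c.src = b.src ∧ c.edges <+: b.edges then
        some ⟨a, d.comp (c.strip b h'.1 h'.2) hcd.symm, by
          exact hab.trans ((GPath.strip_rng _ _ _ _).symm.trans (GPath.comp_rng _ _ _).symm)⟩
      else none := rfl

lemma F_mul (x y : PolyM ℕ) : F (x * y) = F x * F y := by
  cases x with
  | none => rfl
  | some n =>
    cases y with
    | none =>
      obtain ⟨a, b, hab⟩ := n
      rfl
    | some m =>
      obtain ⟨a, b, hab⟩ := n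
      obtain ⟨c, d, hcd⟩ := m
      have key : ∀ {ι : Type} (p q : (bouquet ι).GPath),
          (p.src = q.src ∧ p.edges <+: q.edges) ↔ p.edges <+: q.edges :=
        fun p q => and_iff_right (Subsingleton.elim _ _)
      show F (GIS.nz ⟨a, b, hab⟩ * GIS.nz ⟨c, d, hcd⟩ : GIS (bouquet ℕ))
        = (GIS.nz ⟨enc a, enc b, Subsingleton.elim _ _⟩
            * GIS.nz ⟨enc c, enc d, Subsingleton.elim _ _⟩ : GIS (bouquet Bool))
      rw [mul_some_some, mul_some_some]
      by_cases h1 : b.edges <+: c.edges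
      · rw [dif_pos ((key b c).mpr h1),
          dif_pos ((key (enc b) (enc c)).mpr (code_prefix.mpr h1))]
        refine congrArg some (nz_eq _ _ ?_ rfl)
        show code (a.edges ++ c.edges.drop b.edges.length)
          = code a.edges ++ (code c.edges).drop (code b.edges).length
        exact (code_append _ _).trans (congrArg (code a.edges ++ ·) (code_drop h1).symm)
      · by_cases h2 : c.edges <+: b.edges
        · rw [dif_neg (fun h => h1 ((key b c).mp h)),
            dif_pos ((key c b).mpr h2),
            dif_neg (fun h => h1 (code_prefix.mp ((key (enc b) (enc c)).mp h))),
            dif_pos ((key (enc c) (enc b)).mpr (code_prefix.mpr h2))]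
          refine congrArg some (nz_eq _ _ rfl ?_)
          show code (d.edges ++ b.edges.drop c.edges.length)
            = code d.edges ++ (code b.edges).drop (code c.edges).length
          exact (code_append _ _).trans (congrArg (code d.edges ++ ·) (code_drop h2).symm)
        · rw [dif_neg (fun h => h1 ((key b c).mp h)),
            dif_neg (fun h => h2 ((key c b).mp h)),
            dif_neg (fun h => h1 (code_prefix.mp ((key (enc b) (enc c)).mp h))),
            dif_neg (fun h => h2 (code_prefix.mp ((key (enc c) (enc b)).mp h)))]
          rfl

end PolyEmbed

open DiGraph in
/-- The polycyclic monoid `P_ω` on countably many generators embeds into the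
polycyclic monoid `P₂`. -/
theorem poly_omega_embeds_poly_two :
    ∃ f : PolyM ℕ →ₙ* PolyM Bool, Function.Injective f := by
  exact ⟨⟨PolyEmbed.F, PolyEmbed.F_mul⟩, PolyEmbed.F_inj⟩
end

section
/- For an arbitrary graph E, the embedding F : G(E) → P_λ constructed from injections of vertices and edges into the generators is a topological embedding of (G(E), τ_{F_ω}) into (P_λ, τ_{F_ω}), where λ = |G(E)|; in particular F(U_n(0)) = F(G(E)) ∩ V_{n+1}(0), where U_n(0) = {u v^{-1} ∈ G(E) : min{|u|,|v|} > n} ∪ {0} and V_{n+1}(0) = {u v^{-1} ∈ P_λ : min{|u|,|v|} > n+1} ∪ {0}. -/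
universe u

namespace DiGraph

variable {G : DiGraph.{u}}

/-- membership predicate for the basic neighbourhoods of zero: all of
`a b⁻¹` with `a, b ∈ F`, together with `0`. -/
def inUF (F : Set G.GPath) : GIS G → Prop
  | none => True
  | some n => n.a ∈ F ∧ n.b ∈ F

/-- The basic neighbourhood `U_F(0) = {a b⁻¹ : a, b ∈ F} ∪ {0}` of zero. -/
def UF (F : Set G.GPath) : Set (GIS G) := {x | inUF F x}

lemma inUF_mono {F₁ F₂ : Set G.GPath} (h : F₁ ⊆ F₂) :
    ∀ x : GIS G, inUF F₁ x → inUF F₂ x := by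
  intro x hx
  cases x with
  | none => trivial
  | some n => exact ⟨h hx.1, h hx.2⟩

/-- The topology `τ_𝓕` on `G(E)` determined by a filter `𝓕` on `Path(E)`:
every nonzero element is isolated, and the sets `U_F(0)`, `F ∈ 𝓕`, form a
neighbourhood base at `0`. -/
def tauF (𝓕 : Filter G.GPath) : TopologicalSpace (GIS G) where
  IsOpen U := (0 : GIS G) ∈ U → ∃ F ∈ 𝓕, UF F ⊆ U
  isOpen_univ := fun _ => ⟨Set.univ, Filter.univ_mem, Set.subset_univ _⟩
  isOpen_inter := fun U V hU hV h0 => by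
    obtain ⟨F₁, hF₁, hs₁⟩ := hU h0.1
    obtain ⟨F₂, hF₂, hs₂⟩ := hV h0.2
    exact ⟨F₁ ∩ F₂, Filter.inter_mem hF₁ hF₂, fun x hx =>
      ⟨hs₁ (inUF_mono Set.inter_subset_left x hx),
       hs₂ (inUF_mono Set.inter_subset_right x hx)⟩⟩
  isOpen_sUnion := fun S hS h0 => by
    obtain ⟨U, hU, h0U⟩ := h0
    obtain ⟨F, hF, hs⟩ := hS U hU h0U
    exact ⟨F, hF, hs.trans (Set.subset_sUnion_of_mem hU)⟩

/-- The prefix partial order on paths: `a ≤ b` iff `b` is a prefix of `a`. -/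
def prefLE (a b : G.GPath) : Prop := b.src = a.src ∧ b.edges <+: a.edges

/-- An ideal of `(Path(E), ≤)`: a set `A` with `↓A = A`. -/
def IsIdeal (A : Set G.GPath) : Prop :=
  ∀ a b : G.GPath, prefLE a b → b ∈ A → a ∈ A

/-- A topological filter on `Path(E)`:
(i) for `F ∈ 𝓕` and paths `a, b` with `r(a) = r(b)`, the set
`F \ {bk : k ∈ Path(E), ak ∉ F}` belongs to `𝓕`;
(ii) `𝓕` contains all cofinite subsets of `Path(E)`;
(iii) `𝓕` has a base consisting of ideals of `(Path(E), ≤)`. -/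
def IsTopFilter (𝓕 : Filter G.GPath) : Prop :=
  (∀ F ∈ 𝓕, ∀ a b : G.GPath, a.rng = b.rng →
      F \ {p | ∃ (k : G.GPath) (h1 : b.rng = k.src) (h2 : a.rng = k.src),
        p = b.comp k h1 ∧ a.comp k h2 ∉ F} ∈ 𝓕) ∧
  𝓕 ≤ Filter.cofinite ∧
  (∀ F ∈ 𝓕, ∃ I ∈ 𝓕, I ⊆ F ∧ IsIdeal I)

variable (G) in
/-- The filter `𝓕_ω` generated by the sets `U_n = {u ∈ Path(E) : |u| > n}`. -/
def Fomega : Filter G.GPath :=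
  Filter.generate {S | ∃ n : ℕ, S = {u : G.GPath | n < u.edges.length}}

variable (G) in
/-- `U_n(0) = {u v⁻¹ : min{|u|,|v|} > n} ∪ {0}`. -/
def Un (n : ℕ) : Set (GIS G) := UF {u : G.GPath | n < u.edges.length}

end DiGraph

namespace DiGraph

variable {G : DiGraph.{u}}

lemma gpath_ext' {H : DiGraph.{u}} {p q : H.GPath} (h1 : p.src = q.src)
    (h2 : p.edges = q.edges) : p = q := by
  cases p; cases q; cases h1; cases h2; rfl

lemma nz_ext' {H : DiGraph.{u}} {p q : NZ H} (h1 : p.a = q.a) (h2 : p.b = q.b) : p = q := by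
  cases p; cases q; cases h1; cases h2; rfl

section Emb

variable {ι : Type u} (g : G.V → ι) (hh : G.E → ι)

instance : Subsingleton (bouquet ι).V := inferInstanceAs (Subsingleton PUnit)

lemma bouquet_valid (v : (bouquet ι).V) (l : List ι) : (bouquet ι).Valid v l := by
  induction l generalizing v with
  | nil => trivial
  | cons e t ih => exact ⟨Subsingleton.elim _ _, ih _⟩

/-- The image of a path under the embedding. -/
def Wp (p : G.GPath) : (bouquet ι).GPath :=
  ⟨PUnit.unit, g p.src :: p.edges.map hh, bouquet_valid _ _⟩

variable {g hh}

lemma Wp_inj (hg : Function.Injective g) (hinj : Function.Injective hh) :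
    Function.Injective (Wp g hh) := by
  intro p q e
  have he : g p.src :: p.edges.map hh = g q.src :: q.edges.map hh := congrArg GPath.edges e
  rw [List.cons.injEq] at he
  exact gpath_ext' (hg he.1) (List.map_injective_iff.mpr hinj he.2)

lemma map_prefix_iff (hinj : Function.Injective hh) (l₁ l₂ : List G.E) :
    l₁.map hh <+: l₂.map hh ↔ l₁ <+: l₂ := by
  constructor
  · intro hp
    rw [List.prefix_iff_eq_take] at hp ⊢
    rw [List.length_map, ← List.map_take] at hp
    exact List.map_injective_iff.mpr hinj hp
  · exact fun hp => hp.map hh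

lemma Wp_prefix (hg : Function.Injective g) (hinj : Function.Injective hh) (b c : G.GPath) :
    ((Wp g hh b).src = (Wp g hh c).src ∧ (Wp g hh b).edges <+: (Wp g hh c).edges) ↔
      (b.src = c.src ∧ b.edges <+: c.edges) := by
  show (_ ∧ g b.src :: b.edges.map hh <+: g c.src :: c.edges.map hh) ↔ _
  rw [List.cons_prefix_cons, map_prefix_iff hinj]
  constructor
  · rintro ⟨-, h1, h2⟩; exact ⟨hg h1, h2⟩
  · rintro ⟨h1, h2⟩; exact ⟨rfl, congrArg g h1, h2⟩

variable (g hh)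

/-- The embedding `G(E) → P_ι`. -/
def Fmap : GIS G → PolyM ι
  | none => none
  | some n => some ⟨Wp g hh n.a, Wp g hh n.b, Subsingleton.elim _ _⟩

open scoped Classical in
lemma some_mul_some {a b c d : G.GPath} (hab : a.rng = b.rng) (hcd : c.rng = d.rng) :
    (GIS.nz ⟨a, b, hab⟩ * GIS.nz ⟨c, d, hcd⟩ : GIS G) =
      if h : b.src = c.src ∧ b.edges <+: c.edges then
        GIS.nz ⟨a.comp (b.strip c h.1 h.2) hab, d, by
          exact (GPath.comp_rng _ _ _).trans ((GPath.strip_rng _ _ _ _).trans hcd)⟩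
      else if h' : c.src = b.src ∧ c.edges <+: b.edges then
        GIS.nz ⟨a, d.comp (c.strip b h'.1 h'.2) hcd.symm, by
          exact hab.trans ((GPath.strip_rng _ _ _ _).symm.trans (GPath.comp_rng _ _ _).symm)⟩
      else none := rfl

variable {g hh}

lemma Wp_comp_strip (hg : Function.Injective g) (hinj : Function.Injective hh)
    {a b c : G.GPath} (hab : a.rng = b.rng) (h : b.src = c.src ∧ b.edges <+: c.edges)
    (h' : (Wp g hh b).src = (Wp g hh c).src ∧ (Wp g hh b).edges <+: (Wp g hh c).edges) :
    Wp g hh (a.comp (b.strip c h.1 h.2) hab) =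
      (Wp g hh a).comp ((Wp g hh b).strip (Wp g hh c) h'.1 h'.2) (Subsingleton.elim _ _) := by
  refine gpath_ext' (Subsingleton.elim _ _) ?_
  show g a.src :: (a.edges ++ c.edges.drop b.edges.length).map hh =
    (g a.src :: a.edges.map hh) ++ (g c.src :: c.edges.map hh).drop (g b.src :: b.edges.map hh).length
  simp [List.map_append, ← List.map_drop]

lemma Fmap_mul (hg : Function.Injective g) (hinj : Function.Injective hh) (x y : GIS G) :
    Fmap g hh (x * y) = Fmap g hh x * Fmap g hh y := by
  cases x with
  | none => rfl
  | some m =>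
    cases y with
    | none => rfl
    | some k =>
      obtain ⟨a, b, hab⟩ := m
      obtain ⟨c, d, hcd⟩ := k
      show Fmap g hh (GIS.nz ⟨a, b, hab⟩ * GIS.nz ⟨c, d, hcd⟩) =
        GIS.nz ⟨Wp g hh a, Wp g hh b, Subsingleton.elim _ _⟩ *
          GIS.nz ⟨Wp g hh c, Wp g hh d, Subsingleton.elim _ _⟩
      rw [some_mul_some, some_mul_some]
      by_cases h1 : b.src = c.src ∧ b.edges <+: c.edges
      · have h1' := (Wp_prefix hg hinj b c).mpr h1
        rw [dif_pos h1, dif_pos h1']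
        exact congrArg some (nz_ext' (Wp_comp_strip hg hinj hab h1 h1') rfl)
      · have h1' := fun hp => h1 ((Wp_prefix hg hinj b c).mp hp)
        rw [dif_neg h1, dif_neg h1']
        by_cases h2 : c.src = b.src ∧ c.edges <+: b.edges
        · have h2' := (Wp_prefix hg hinj c b).mpr h2
          erw [dif_pos h2, dif_pos h2']
          exact congrArg some (nz_ext' rfl (Wp_comp_strip hg hinj hcd.symm h2 h2'))
        · have h2' := fun hp => h2 ((Wp_prefix hg hinj c b).mp hp)
          erw [dif_neg h2, dif_neg h2']
          rfl

lemma Fmap_mem_Un (g : G.V → ι) (hh : G.E → ι) (x : GIS G) (n : ℕ) :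
    x ∈ Un G n ↔ Fmap g hh x ∈ Un (bouquet ι) (n + 1) := by
  cases x with
  | none => exact ⟨fun _ => trivial, fun _ => trivial⟩
  | some m =>
    show (n < m.a.edges.length ∧ n < m.b.edges.length) ↔
      (n + 1 < (Wp g hh m.a).edges.length ∧ n + 1 < (Wp g hh m.b).edges.length)
    have hl : ∀ p : G.GPath, (Wp g hh p).edges.length = p.edges.length + 1 := fun p => by
      show (List.map hh p.edges).length + 1 = _; exact congrArg (· + 1) (List.length_map ..)
    rw [hl, hl]
    omega


end Emb

lemma tauF_isOpen_iff (𝓕 : Filter G.GPath) (U : Set (GIS G)) :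
    @IsOpen _ (tauF 𝓕) U ↔ ((0 : GIS G) ∈ U → ∃ F ∈ 𝓕, UF F ⊆ U) := Iff.rfl

lemma mem_Fomega {F : Set G.GPath} :
    F ∈ Fomega G ↔ ∃ n : ℕ, {u : G.GPath | n < u.edges.length} ⊆ F := by
  constructor
  · intro hF
    have hF' : Filter.GenerateSets {S | ∃ n : ℕ, S = {u : G.GPath | n < u.edges.length}} F := hF
    clear hF
    induction hF' with
    | basic h => obtain ⟨n, rfl⟩ := h; exact ⟨n, subset_rfl⟩
    | univ => exact ⟨0, Set.subset_univ _⟩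
    | superset _ h ih => obtain ⟨n, hn⟩ := ih; exact ⟨n, hn.trans h⟩
    | inter _ _ ih1 ih2 =>
      obtain ⟨n, hn⟩ := ih1; obtain ⟨m, hm⟩ := ih2
      refine ⟨max n m, fun u hu => ?_⟩
      have hu' : max n m < u.edges.length := hu
      exact ⟨hn (lt_of_le_of_lt (le_max_left n m) hu'),
        hm (lt_of_le_of_lt (le_max_right n m) hu')⟩
  · rintro ⟨n, hn⟩
    exact Filter.mem_of_superset (Filter.mem_generate_of_mem ⟨n, rfl⟩) hn

lemma tauF_Fomega_isOpen_iff {U : Set (GIS G)} :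
    @IsOpen _ (tauF (Fomega G)) U ↔ ((0 : GIS G) ∈ U → ∃ n, Un G n ⊆ U) := by
  rw [tauF_isOpen_iff]
  constructor <;> intro h h0
  · obtain ⟨F, hF, hs⟩ := h h0
    obtain ⟨n, hn⟩ := mem_Fomega.mp hF
    exact ⟨n, fun x hx => hs (inUF_mono hn x hx)⟩
  · obtain ⟨n, hn⟩ := h h0
    exact ⟨_, mem_Fomega.mpr ⟨n, subset_rfl⟩, hn⟩

end DiGraph

open DiGraph in
/-- For an arbitrary graph `E`, the embedding `F : G(E) → P_λ` (constructed
from injections of vertices and edges into the generators) is a topological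
embedding of `(G(E), τ_{𝓕_ω})` into `(P_λ, τ_{𝓕_ω})`, where `λ = |G(E)|`; in
particular `F(Uₙ(0)) = F(G(E)) ∩ V_{n+1}(0)`, where
`Uₙ(0) = {u v⁻¹ ∈ G(E) : min{|u|,|v|} > n} ∪ {0}` and
`V_{n+1}(0) = {u v⁻¹ ∈ P_λ : min{|u|,|v|} > n+1} ∪ {0}`. -/
theorem gis_topological_embedding_Fomega (G : DiGraph.{u}) :
    ∃ f : GIS G →ₙ* PolyM ((Cardinal.mk (GIS G)).out),
      Function.Injective f ∧ f 0 = 0 ∧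
      (∀ n : ℕ, f '' Un G n =
        Set.range f ∩ Un (bouquet ((Cardinal.mk (GIS G)).out)) (n + 1)) ∧
      @Topology.IsEmbedding _ _ (tauF (Fomega G))
        (tauF (Fomega (bouquet ((Cardinal.mk (GIS G)).out)))) f := by
  
  classical
  obtain ⟨ψ⟩ : Nonempty ((G.V ⊕ G.E) ↪ (Cardinal.mk (GIS G)).out) := by
    rw [← Cardinal.le_def, Cardinal.mk_out]
    refine Cardinal.mk_le_of_injective (f := fun x => match x with
      | Sum.inl v => (GIS.nz ⟨⟨v, [], trivial⟩, ⟨v, [], trivial⟩, rfl⟩ : GIS G)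
      | Sum.inr e => GIS.nz ⟨⟨G.s e, [e], rfl, trivial⟩, ⟨G.r e, [], trivial⟩, rfl⟩) ?_
    rintro (v | e) (w | f) hxy
    · exact congrArg Sum.inl (congrArg (fun m : NZ G => m.a.src) (Option.some.inj hxy))
    · exact absurd (congrArg (fun m : NZ G => m.a.edges) (Option.some.inj hxy)) (by simp)
    · exact absurd (congrArg (fun m : NZ G => m.a.edges) (Option.some.inj hxy)) (by simp)
    · exact congrArg Sum.inr
        (by simpa using congrArg (fun m : NZ G => m.a.edges) (Option.some.inj hxy))
  set ι' := (Cardinal.mk (GIS G)).out with hι'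
  let g : G.V → ι' := fun v => ψ (Sum.inl v)
  let hh : G.E → ι' := fun e => ψ (Sum.inr e)
  have hg : Function.Injective g := fun a b h => Sum.inl.inj (ψ.injective h)
  have hinj : Function.Injective hh := fun a b h => Sum.inr.inj (ψ.injective h)
  have Finj : Function.Injective (Fmap g hh) := by
    intro x y hxy
    cases x with
    | none =>
      cases y with
      | none => rfl
      | some k => cases hxy
    | some m =>
      cases y with
      | none => cases hxy
      | some k =>
        have h := Option.some.inj hxy
        exact congrArg some (nz_ext' (Wp_inj hg hinj (congrArg NZ.a h))
          (Wp_inj hg hinj (congrArg NZ.b h)))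
  have hImg : ∀ n : ℕ, Fmap g hh '' Un G n =
      Set.range (Fmap g hh) ∩ Un (bouquet ι') (n + 1) := by
    intro n
    ext z
    constructor
    · rintro ⟨x, hx, rfl⟩
      exact ⟨⟨x, rfl⟩, (Fmap_mem_Un g hh x n).mp hx⟩
    · rintro ⟨⟨x, rfl⟩, hz⟩
      exact ⟨x, (Fmap_mem_Un g hh x n).mpr hz, rfl⟩
  refine ⟨⟨Fmap g hh, Fmap_mul hg hinj⟩, Finj, rfl, hImg, ?_⟩
  have hind : tauF (Fomega G) =
      TopologicalSpace.induced (Fmap g hh) (tauF (Fomega (bouquet ι'))) := by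
    refine TopologicalSpace.ext_iff.mpr fun U => ?_
    rw [tauF_Fomega_isOpen_iff]
    rw [show @IsOpen _ (TopologicalSpace.induced (Fmap g hh) (tauF (Fomega (bouquet ι')))) U ↔
      ∃ V, @IsOpen _ (tauF (Fomega (bouquet ι'))) V ∧ Fmap g hh ⁻¹' V = U from isOpen_induced_iff (t := tauF (Fomega (bouquet ι')))]
    constructor
    · intro hU
      by_cases h0 : (0 : GIS G) ∈ U
      · obtain ⟨n, hn⟩ := hU h0
        refine ⟨Fmap g hh '' U ∪ Un (bouquet ι') (n + 1), ?_, ?_⟩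
        · exact (tauF_Fomega_isOpen_iff (G := bouquet ι')).mpr
            fun _ => ⟨n + 1, fun z hz => Or.inr hz⟩
        · ext x
          show Fmap g hh x ∈ Fmap g hh '' U ∪ Un (bouquet ι') (n + 1) ↔ x ∈ U
          constructor
          · rintro (⟨y, hy, hxy⟩ | hx)
            · exact Finj hxy ▸ hy
            · exact hn ((Fmap_mem_Un g hh x n).mpr hx)
          · intro hx
            exact Or.inl ⟨x, hx, rfl⟩
      · refine ⟨Fmap g hh '' U, ?_, Set.preimage_image_eq U Finj⟩
        refine (tauF_Fomega_isOpen_iff (G := bouquet ι')).mpr fun h0' => ?_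
        obtain ⟨y, hy, hy0⟩ := h0'
        have hy0' : Fmap g hh y = Fmap g hh (0 : GIS G) := hy0
        exact absurd (Finj hy0' ▸ hy) h0
    · rintro ⟨V, hV, rfl⟩
      intro h0
      obtain ⟨m, hm⟩ := (tauF_Fomega_isOpen_iff (G := bouquet ι')).mp hV h0
      refine ⟨m, fun x hx => ?_⟩
      have hx' : Fmap g hh x ∈ Un (bouquet ι') (m + 1) := (Fmap_mem_Un g hh x m).mp hx
      exact hm (inUF_mono (fun u hu => Nat.lt_of_succ_lt hu) _ hx')
  exact letI := tauF (Fomega G); letI := tauF (Fomega (bouquet ι')); ⟨⟨hind⟩, Finj⟩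
end
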